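/- For all matrices X and S indexed by (Fin d_a) × J_k that are PSD with trace 1, one has ‖A(X − S)‖² ≤ 4 (this is the curvature bound C ≤ 4 for the Frank–Wolfe method applied to the EXT least-squares problem over the spectraplex). -/

import Mathlib

open Matrix
open scoped Kronecker ComplexOrder

noncomputable section

instance monoDecidable {k d : ℕ} : DecidablePred (Monotone : (Fin k → Fin d) → Prop) :=
  fun f => decidable_of_iff (∀ a b : Fin k, a ≤ b → f a ≤ f b) Iff.rfl

/-- `Jk d k` : nondecreasing sequences of length `k` from `{0, …, d-1}`. -/
abbrev Jk (d k : ℕ) := {f : Fin k → Fin d // Monotone f}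

/-- the nondecreasing rearrangement of a sequence. -/
def sortTuple {d k : ℕ} (i : Fin k → Fin d) : Jk d k :=
  ⟨i ∘ Tuple.sort i, Tuple.monotone_sort i⟩

/-- `permCount j` : the number of sequences whose sorted rearrangement is `j`. -/
def permCount {d k : ℕ} (j : Jk d k) : ℕ :=
  (Finset.univ.filter fun i : Fin k → Fin d => sortTuple i = j).card

/-- The scaled partition matrix `P`. -/
def Pmat (d k : ℕ) : Matrix (Fin k → Fin d) (Jk d k) ℂ :=
  fun i j => if sortTuple i = j then (((permCount j : ℝ) ^ (-(1/2) : ℝ) : ℝ) : ℂ) else 0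

/-- `cons0 b r` is the sequence `b⌢r` sending `0` to `b` and `s+1` to `r s`. -/
def cons0 {d k : ℕ} (b : Fin d) (r : Fin (k - 1) → Fin d) : Fin k → Fin d :=
  fun s => if h : (s : ℕ) = 0 then b else r ⟨(s : ℕ) - 1, by have := s.isLt; omega⟩

/-- Partial trace over the last `k - 1` factors. -/
def PTr (da d k : ℕ)
    (M : Matrix (Fin da × (Fin k → Fin d)) (Fin da × (Fin k → Fin d)) ℂ) :
    Matrix (Fin da × Fin d) (Fin da × Fin d) ℂ :=
  fun p q => ∑ r : Fin (k - 1) → Fin d, M (p.1, cons0 p.2 r) (q.1, cons0 q.2 r)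

/-- The operator `A`. -/
def Amap (da d k : ℕ) (X : Matrix (Fin da × Jk d k) (Fin da × Jk d k) ℂ) :
    Matrix (Fin da × Fin d) (Fin da × Fin d) ℂ :=
  PTr da d k (((1 : Matrix (Fin da) (Fin da) ℂ) ⊗ₖ Pmat d k) * X *
    ((1 : Matrix (Fin da) (Fin da) ℂ) ⊗ₖ Pmat d k)ᴴ)

/-- The extension operator `E` : `E(W) ((a,i),(a',i')) = W ((a, i 0), (a', i' 0))` when
`i` and `i'` agree on all later coordinates, and `0` otherwise. -/
def Emat (da d k : ℕ) (hk : 0 < k)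
    (W : Matrix (Fin da × Fin d) (Fin da × Fin d) ℂ) :
    Matrix (Fin da × (Fin k → Fin d)) (Fin da × (Fin k → Fin d)) ℂ :=
  fun p q =>
    if ∀ s : Fin (k - 1),
        p.2 ⟨(s : ℕ) + 1, by have := s.isLt; omega⟩ =
          q.2 ⟨(s : ℕ) + 1, by have := s.isLt; omega⟩
    then W (p.1, p.2 ⟨0, hk⟩) (q.1, q.2 ⟨0, hk⟩) else 0

/-- The adjoint operator `A†`. -/
def Adag (da d k : ℕ) (hk : 0 < k)
    (W : Matrix (Fin da × Fin d) (Fin da × Fin d) ℂ) :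
    Matrix (Fin da × Jk d k) (Fin da × Jk d k) ℂ :=
  ((1 : Matrix (Fin da) (Fin da) ℂ) ⊗ₖ Pmat d k)ᴴ * Emat da d k hk W *
    ((1 : Matrix (Fin da) (Fin da) ℂ) ⊗ₖ Pmat d k)

/-- Partial transpose in the second index. -/
def pTransp {m α : Type*} (M : Matrix (m × α) (m × α) ℂ) : Matrix (m × α) (m × α) ℂ :=
  fun p q => M (p.1, q.2) (q.1, p.2)

/-- Squared Frobenius norm. -/
def frobSq {α β : Type*} [Fintype α] [Fintype β] (M : Matrix α β ℂ) : ℝ :=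
  ∑ p, ∑ q, ‖M p q‖ ^ 2

/-- Largest eigenvalue of a Hermitian matrix. -/
def lamMax {n : Type*} [Fintype n] [DecidableEq n]
    {M : Matrix n n ℂ} (hM : M.IsHermitian) : ℝ :=
  ⨆ i, hM.eigenvalues i

end

set_option maxHeartbeats 1000000

noncomputable section AuxFW

def consEquiv (d k : ℕ) (hk : 0 < k) : (Fin d × (Fin (k - 1) → Fin d)) ≃ (Fin k → Fin d) where
  toFun x := cons0 x.1 x.2
  invFun i := (i ⟨0, hk⟩, fun s => i ⟨(s : ℕ) + 1, by have := s.isLt; omega⟩)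
  left_inv := by
    rintro ⟨b, r⟩
    refine Prod.ext ?_ ?_
    · simp [cons0]
    · funext s
      simp only [cons0]
      rw [dif_neg (by omega)]
      exact congrArg r (Fin.ext (by simp))
  right_inv := by
    intro i
    funext s
    simp only [cons0]
    by_cases h : (s : ℕ) = 0
    · rw [dif_pos h]; exact congrArg i (Fin.ext h.symm)
    · rw [dif_neg h]; exact congrArg i (Fin.ext (by have := s.isLt; simp; omega))


def Vmat (da d k : ℕ) (r : Fin (k - 1) → Fin d) :
    Matrix (Fin da × (Fin k → Fin d)) (Fin da × Fin d) ℂ :=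
  fun p q => if p = (q.1, cons0 q.2 r) then 1 else 0


lemma PTr_eq (da d k : ℕ)
    (M : Matrix (Fin da × (Fin k → Fin d)) (Fin da × (Fin k → Fin d)) ℂ) :
    PTr da d k M = ∑ r, (Vmat da d k r)ᴴ * M * Vmat da d k r := by
  ext p q
  simp only [PTr, Matrix.sum_apply, Matrix.mul_apply, Vmat, conjTranspose_apply,
    apply_ite (star : ℂ → ℂ), star_one, star_zero, ite_mul, mul_ite, one_mul, mul_one,
    zero_mul, mul_zero, Finset.sum_ite_eq, Finset.sum_ite_eq', Finset.mem_univ, if_true]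


lemma VVdag (da d k : ℕ) (hk : 0 < k) :
    ∑ r, Vmat da d k r * (Vmat da d k r)ᴴ = 1 := by
  ext p q
  have h1 : ∀ r, (Vmat da d k r * (Vmat da d k r)ᴴ) p q
      = ∑ c : Fin da, ∑ b : Fin d,
        (if p = (c, cons0 b r) then 1 else 0) * (if q = (c, cons0 b r) then (1:ℂ) else 0) := by
    intro r
    rw [Matrix.mul_apply, Fintype.sum_prod_type]
    simp [Vmat, apply_ite (star : ℂ → ℂ)]
  rw [Matrix.sum_apply]
  simp only [h1]
  rw [Finset.sum_comm]
  have h2 : ∀ c : Fin da, (∑ r : Fin (k-1) → Fin d, ∑ b : Fin d,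
      (if p = (c, cons0 b r) then 1 else 0) * (if q = (c, cons0 b r) then (1:ℂ) else 0))
      = ∑ i : Fin k → Fin d,
        (if p = (c, i) then 1 else 0) * (if q = (c, i) then (1:ℂ) else 0) := by
    intro c
    rw [Finset.sum_comm,
      ← Equiv.sum_comp (consEquiv d k hk)
        (fun i => (if p = (c, i) then 1 else 0) * (if q = (c, i) then (1:ℂ) else 0)),
      Fintype.sum_prod_type]
    rfl
  simp only [h2]
  rw [show (∑ x : Fin da, ∑ i : Fin k → Fin d,
      (if p = (x, i) then 1 else 0) * (if q = (x, i) then (1:ℂ) else 0))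
      = ∑ w : Fin da × (Fin k → Fin d),
        (if p = w then 1 else 0) * (if q = w then (1:ℂ) else 0) from
    (Fintype.sum_prod_type (f := fun w : Fin da × (Fin k → Fin d) =>
      (if p = w then (1:ℂ) else 0) * (if q = w then 1 else 0))).symm]
  rcases eq_or_ne p q with h | h
  · subst h
    rw [Finset.sum_eq_single p]
    · simp
    · intro w _ hw; simp [Ne.symm hw]
    · simp
  · rw [Finset.sum_eq_zero, Matrix.one_apply_ne h]
    intro w _
    rcases eq_or_ne p w with rfl | hpw
    · simp [Ne.symm h]
    · simp [hpw]


lemma PTr_trace (da d k : ℕ) (hk : 0 < k)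
    (M : Matrix (Fin da × (Fin k → Fin d)) (Fin da × (Fin k → Fin d)) ℂ) :
    (PTr da d k M).trace = M.trace := by
  rw [PTr_eq, trace_sum]
  have : ∀ r, ((Vmat da d k r)ᴴ * M * Vmat da d k r).trace
      = (Vmat da d k r * (Vmat da d k r)ᴴ * M).trace := by
    intro r
    rw [Matrix.trace_mul_comm, ← Matrix.mul_assoc]
  simp only [this]
  rw [← trace_sum]
  congr 1
  rw [← Finset.sum_mul, VVdag da d k hk, Matrix.one_mul]


lemma PTr_posSemidef (da d k : ℕ)
    (M : Matrix (Fin da × (Fin k → Fin d)) (Fin da × (Fin k → Fin d)) ℂ)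
    (hM : M.PosSemidef) : (PTr da d k M).PosSemidef := by
  rw [PTr_eq]
  apply Finset.sum_induction _ _ (fun A B hA hB => hA.add hB) Matrix.PosSemidef.zero
  intro r _
  exact hM.conjTranspose_mul_mul_same _


lemma sortTuple_of_monotone {d k : ℕ} (j : Jk d k) : sortTuple j.1 = j := by
  have h : Tuple.sort j.1 = Equiv.refl _ := Tuple.sort_eq_refl_iff_monotone.mpr j.2
  rw [sortTuple]
  apply Subtype.ext
  simp [h]


lemma permCount_pos {d k : ℕ} (j : Jk d k) : 0 < permCount j := by
  rw [permCount, Finset.card_pos]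
  exact ⟨j.1, by simp [sortTuple_of_monotone]⟩


lemma Pmat_unitary (d k : ℕ) : (Pmat d k)ᴴ * Pmat d k = 1 := by
  ext j j'
  rw [Matrix.mul_apply]
  simp only [Pmat, conjTranspose_apply, apply_ite (star : ℂ → ℂ), star_zero,
    RCLike.star_def, Complex.conj_ofReal, ite_mul, zero_mul, mul_ite, mul_zero]
  rcases eq_or_ne j j' with rfl | hne
  · rw [Matrix.one_apply_eq]
    have hpc : (0:ℝ) < (permCount j : ℝ) := by exact_mod_cast permCount_pos j
    have hval : (((permCount j : ℝ) ^ (-(1/2) : ℝ) : ℝ) : ℂ)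
        * (((permCount j : ℝ) ^ (-(1/2) : ℝ) : ℝ) : ℂ)
        = (((permCount j : ℝ)⁻¹ : ℝ) : ℂ) := by
      rw [← Complex.ofReal_mul, ← Real.rpow_add hpc,
        show (-(1/2) + -(1/2) : ℝ) = -1 by norm_num, Real.rpow_neg_one]
    calc (∑ i : Fin k → Fin d, if sortTuple i = j then
          (if sortTuple i = j then (((permCount j : ℝ) ^ (-(1/2) : ℝ) : ℝ) : ℂ)
            * (((permCount j : ℝ) ^ (-(1/2) : ℝ) : ℝ) : ℂ) else 0) else 0)
        = ∑ i : Fin k → Fin d, if sortTuple i = j then (((permCount j : ℝ)⁻¹ : ℝ) : ℂ) else 0 := by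
          apply Finset.sum_congr rfl
          intro i _
          by_cases h : sortTuple i = j
          · simp only [h, if_true]; exact hval
          · simp [h]
      _ = (permCount j : ℂ) * (((permCount j : ℝ)⁻¹ : ℝ) : ℂ) := by
          rw [Finset.sum_ite, Finset.sum_const_zero, add_zero, Finset.sum_const,
            nsmul_eq_mul]
          rfl
      _ = 1 := by
          have hne0 : (permCount j : ℂ) ≠ 0 := by exact_mod_cast (permCount_pos j).ne'
          push_cast
          exact mul_inv_cancel₀ hne0
  · rw [Matrix.one_apply_ne hne]
    apply Finset.sum_eq_zero
    intro i _
    by_cases h : sortTuple i = j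
    · simp [h, hne]
    · simp [h]


lemma kron_conjTranspose {l m n o : Type*} [Fintype m] [Fintype o]
    (A : Matrix l m ℂ) (B : Matrix n o ℂ) : (A ⊗ₖ B)ᴴ = Aᴴ ⊗ₖ Bᴴ := by
  ext p q
  simp [conjTranspose_apply, Matrix.kroneckerMap_apply, mul_comm]


lemma Qmat_unitary (da d k : ℕ) :
    ((1 : Matrix (Fin da) (Fin da) ℂ) ⊗ₖ Pmat d k)ᴴ *
      ((1 : Matrix (Fin da) (Fin da) ℂ) ⊗ₖ Pmat d k) = 1 := by
  rw [kron_conjTranspose, ← Matrix.mul_kronecker_mul, Pmat_unitary, conjTranspose_one,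
    Matrix.one_mul, Matrix.one_kronecker_one]


lemma Amap_trace (da d k : ℕ) (hk : 0 < k)
    (X : Matrix (Fin da × Jk d k) (Fin da × Jk d k) ℂ) :
    (Amap da d k X).trace = X.trace := by
  rw [Amap, PTr_trace da d k hk, Matrix.trace_mul_comm, ← Matrix.mul_assoc,
    Qmat_unitary, Matrix.one_mul]


lemma Amap_posSemidef (da d k : ℕ)
    (X : Matrix (Fin da × Jk d k) (Fin da × Jk d k) ℂ) (hX : X.PosSemidef) :
    (Amap da d k X).PosSemidef :=
  PTr_posSemidef da d k _ (hX.mul_mul_conjTranspose_same _)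


lemma Amap_sub (da d k : ℕ)
    (X S : Matrix (Fin da × Jk d k) (Fin da × Jk d k) ℂ) :
    Amap da d k (X - S) = Amap da d k X - Amap da d k S := by
  ext p q
  simp [Amap, PTr, Matrix.sub_mul, Matrix.mul_sub, Matrix.sub_apply, Finset.sum_sub_distrib]


lemma frobSq_le_sq_trace {n : Type*} [Fintype n] [DecidableEq n]
    {A : Matrix n n ℂ} (hA : A.PosSemidef) :
    frobSq A ≤ (A.trace.re) ^ 2 := by
  obtain ⟨B, rfl⟩ : ∃ B : Matrix n n ℂ, A = Bᴴ * B := by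
    open scoped MatrixOrder in exact CStarAlgebra.nonneg_iff_eq_star_mul_self.mp hA.nonneg
  set f : n → EuclideanSpace ℂ n := fun p => WithLp.toLp 2 (fun r => B r p) with hf
  have h1 : ∀ p q, (Bᴴ * B) p q = inner ℂ (f p) (f q) := by
    intro p q
    rw [Matrix.mul_apply]
    simp [f, conjTranspose_apply, PiLp.inner_apply, RCLike.inner_apply, mul_comm]
  have h2 : ∀ p, ((Bᴴ * B) p p).re = ‖f p‖ ^ 2 := by
    intro p
    rw [h1, ← @inner_self_eq_norm_sq ℂ _ _ _ _ (f p)]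
    rfl
  have key : ∀ p q, ‖(Bᴴ * B) p q‖ ^ 2
      ≤ ((Bᴴ * B) p p).re * ((Bᴴ * B) q q).re := by
    intro p q
    rw [h1, h2, h2]
    calc ‖(inner ℂ (f p) (f q) : ℂ)‖ ^ 2
        ≤ (‖f p‖ * ‖f q‖) ^ 2 := by
          apply pow_le_pow_left₀ (norm_nonneg _)
          exact norm_inner_le_norm (𝕜 := ℂ) (f p) (f q)
      _ = ‖f p‖ ^ 2 * ‖f q‖ ^ 2 := by ring
  calc frobSq (Bᴴ * B) ≤ ∑ p, ∑ q, ((Bᴴ * B) p p).re * ((Bᴴ * B) q q).re := by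
        apply Finset.sum_le_sum; intro p _; apply Finset.sum_le_sum; intro q _; exact key p q
    _ = (∑ p, ((Bᴴ * B) p p).re) ^ 2 := by
        rw [sq, Finset.sum_mul_sum]
    _ = ((Bᴴ * B).trace.re) ^ 2 := by
        congr 1
        rw [Matrix.trace, Complex.re_sum]
        rfl


attribute [local instance] Matrix.frobeniusSeminormedAddCommGroup

lemma frobSq_eq_norm_sq {α β : Type*} [Fintype α] [Fintype β] (M : Matrix α β ℂ) :
    frobSq M = ‖M‖ ^ 2 := by
  rw [Matrix.frobenius_norm_def, ← Real.rpow_natCast ((∑ i, ∑ j, ‖M i j‖ ^ 2) ^ (1/2 : ℝ)) 2,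
    ← Real.rpow_mul (by positivity)]
  norm_num
  simp [frobSq]


theorem stmt9 (da d k : ℕ) (hda : 0 < da) (hd : 0 < d) (hk : 0 < k)
    (X S : Matrix (Fin da × Jk d k) (Fin da × Jk d k) ℂ)
    (hX : X.PosSemidef) (hXtr : X.trace = 1)
    (hS : S.PosSemidef) (hStr : S.trace = 1) :
    frobSq (Amap da d k (X - S)) ≤ 4 := by
  have hnorm : ∀ (Y : Matrix (Fin da × Jk d k) (Fin da × Jk d k) ℂ),
      Y.PosSemidef → Y.trace = 1 → ‖Amap da d k Y‖ ≤ 1 := by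
    intro Y hY hYtr
    have h1 : frobSq (Amap da d k Y) ≤ ((Amap da d k Y).trace.re) ^ 2 :=
      frobSq_le_sq_trace (Amap_posSemidef da d k Y hY)
    rw [Amap_trace da d k hk, hYtr] at h1
    rw [frobSq_eq_norm_sq] at h1
    simp only [Complex.one_re, one_pow] at h1
    exact (pow_le_one_iff_of_nonneg (norm_nonneg _) two_ne_zero).mp h1
  rw [Amap_sub, frobSq_eq_norm_sq]
  calc ‖Amap da d k X - Amap da d k S‖ ^ 2
      ≤ (‖Amap da d k X‖ + ‖Amap da d k S‖) ^ 2 := by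
        apply pow_le_pow_left₀ (norm_nonneg _) (norm_sub_le _ _)
    _ ≤ (1 + 1) ^ 2 := by
        apply pow_le_pow_left₀ (by positivity)
        exact add_le_add (hnorm X hX hXtr) (hnorm S hS hStr)
    _ = 4 := by norm_num


end AuxFW
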